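/- For every real x, the standard expected improvement is strictly positive: φ(x) − x·Φᶜ(x) > 0. -/

import Mathlib

open MeasureTheory

/-- The standard normal density `φ(x) = (2π)^{-1/2} exp(-x²/2)`. -/
noncomputable def stdNormalPDF (x : ℝ) : ℝ :=
  (Real.sqrt (2 * Real.pi))⁻¹ * Real.exp (-x ^ 2 / 2)

/-- The standard normal complementary CDF `Φᶜ(x) = ∫_x^∞ φ(u) du`. -/
noncomputable def stdNormalCCDF (x : ℝ) : ℝ :=
  ∫ u in Set.Ioi x, stdNormalPDF u

lemma stdNormalPDF_pos (x : ℝ) : 0 < stdNormalPDF x := by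
  unfold stdNormalPDF
  positivity

lemma integrable_stdNormalPDF : Integrable stdNormalPDF := by
  have : stdNormalPDF = fun x => (Real.sqrt (2 * Real.pi))⁻¹ * Real.exp (-(1/2) * x ^ 2) := by
    funext x; unfold stdNormalPDF; ring_nf
  rw [this]
  exact (integrable_exp_neg_mul_sq (by norm_num)).const_mul _

lemma integrable_mul_stdNormalPDF : Integrable (fun u => u * stdNormalPDF u) := by
  have : (fun u => u * stdNormalPDF u)
      = fun u => (Real.sqrt (2 * Real.pi))⁻¹ * (u * Real.exp (-(1/2) * u ^ 2)) := by
    funext u; unfold stdNormalPDF; ring_nf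
  rw [this]
  exact (integrable_mul_exp_neg_mul_sq (by norm_num)).const_mul _

lemma hasDerivAt_neg_stdNormalPDF (y : ℝ) :
    HasDerivAt (fun y => -stdNormalPDF y) (y * stdNormalPDF y) y := by
  have h1 : HasDerivAt (fun y : ℝ => -y ^ 2 / 2) (-y) y := by
    have h := ((hasDerivAt_pow 2 y).neg).div_const 2
    exact h.congr_deriv (by simp; ring)
  have h2 : HasDerivAt (fun y : ℝ => Real.exp (-y ^ 2 / 2))
      (Real.exp (-y ^ 2 / 2) * (-y)) y := h1.exp
  have h3 := (h2.const_mul ((Real.sqrt (2 * Real.pi))⁻¹)).neg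
  refine h3.congr_deriv ?_
  unfold stdNormalPDF
  ring

lemma integral_mul_stdNormalPDF (x : ℝ) :
    ∫ u in Set.Ioi x, u * stdNormalPDF u = stdNormalPDF x := by
  have h := integral_Ioi_of_hasDerivAt_of_tendsto'
    (f := fun y => -stdNormalPDF y) (f' := fun y => y * stdNormalPDF y) (a := x) (m := 0)
    (fun y _ => hasDerivAt_neg_stdNormalPDF y)
    integrable_mul_stdNormalPDF.integrableOn ?_
  · simpa using h
  · have : Filter.Tendsto (fun y : ℝ => stdNormalPDF y) Filter.atTop (nhds 0) := by
      unfold stdNormalPDF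
      rw [show (0:ℝ) = (Real.sqrt (2 * Real.pi))⁻¹ * 0 by ring]
      apply Filter.Tendsto.const_mul
      apply Real.tendsto_exp_atBot.comp
      apply Filter.Tendsto.atBot_div_const (by norm_num)
      exact Filter.tendsto_neg_atBot_iff.mpr (Filter.tendsto_pow_atTop (by norm_num))
    simpa using this.neg

/-- The standard expected improvement is strictly positive everywhere. -/
theorem stmt3 (x : ℝ) : stdNormalPDF x - x * stdNormalCCDF x > 0 := by
  have key : stdNormalPDF x - x * stdNormalCCDF x
      = ∫ u in Set.Ioi x, (u - x) * stdNormalPDF u := by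
    rw [show (fun u => (u - x) * stdNormalPDF u)
        = fun u => u * stdNormalPDF u - x * stdNormalPDF u by funext u; ring]
    rw [integral_sub integrable_mul_stdNormalPDF.integrableOn
      (integrable_stdNormalPDF.integrableOn.const_mul x)]
    rw [integral_mul_stdNormalPDF, MeasureTheory.integral_const_mul]
    rfl
  rw [key]
  have hnn : 0 ≤ᵐ[volume.restrict (Set.Ioi x)] fun u => (u - x) * stdNormalPDF u := by
    filter_upwards [ae_restrict_mem measurableSet_Ioi] with u hu
    exact mul_nonneg (by simp [Set.mem_Ioi] at hu; linarith) (stdNormalPDF_pos u).le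
  have hint : IntegrableOn (fun u => (u - x) * stdNormalPDF u) (Set.Ioi x) := by
    rw [show (fun u => (u - x) * stdNormalPDF u)
        = fun u => u * stdNormalPDF u - x * stdNormalPDF u by funext u; ring]
    exact integrable_mul_stdNormalPDF.integrableOn.sub
      (integrable_stdNormalPDF.integrableOn.const_mul x)
  rw [gt_iff_lt, setIntegral_pos_iff_support_of_nonneg_ae hnn hint]
  have hsub : Set.Ioi x ⊆ Function.support (fun u => (u - x) * stdNormalPDF u) ∩ Set.Ioi x := by
    intro u hu
    refine ⟨?_, hu⟩
    simp only [Function.mem_support]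
    have : (0:ℝ) < u - x := by simp [Set.mem_Ioi] at hu; linarith
    exact ne_of_gt (mul_pos this (stdNormalPDF_pos u))
  calc (0:ENNReal) < volume (Set.Ioi x) := by simp [Real.volume_Ioi]
    _ ≤ _ := measure_mono hsub
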